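/- The q-Meixner polynomials satisfy the contiguous relation (bc + q^{-z})·M_n(q^{-z}; b, c/q; q) = (c(bq^{n+1}-1)/q^{n+1})·M_{n+1}(q^{-z}; b, c; q) + ((q^{n+1}+c)/q^{n+1})·M_n(q^{-z}; b, c; q) for all z. -/

import Mathlib

open MeasureTheory Finset

/-- Finite q-Pochhammer symbol `(a;q)_k = ∏_{j<k} (1 - a q^j)`. -/
noncomputable def qPoch (q a : ℝ) (k : ℕ) : ℝ := ∏ j ∈ Finset.range k, (1 - a * q ^ j)

/-- Infinite q-Pochhammer symbol `(a;q)_∞ = ∏_{j≥0} (1 - a q^j)`. -/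
noncomputable def qPochInf (q a : ℝ) : ℝ := ∏' k : ℕ, (1 - a * q ^ k)

/-- General basic hypergeometric series `ᵣφₛ` with numerator parameters `as`,
denominator parameters `bs`. -/
noncomputable def bhs (q : ℝ) (as bs : List ℝ) (z : ℝ) : ℝ :=
  ∑' k : ℕ,
    (as.map (fun a => qPoch q a k)).prod /
        (qPoch q q k * (bs.map (fun b => qPoch q b k)).prod) *
      ((-1 : ℝ) ^ k * q ^ (k * (k - 1) / 2)) ^ ((1 + (bs.length : ℤ)) - (as.length : ℤ)) *
      z ^ k

/-- q-Laguerre polynomial `L_n^{(δ)}(z;q)` (terminating `₁φ₁` series). -/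
noncomputable def qLaguerre (q δ : ℝ) (n : ℕ) (z : ℝ) : ℝ :=
  (qPoch q (q ^ (δ + 1)) n / qPoch q q n) *
    ∑ k ∈ Finset.range (n + 1),
      qPoch q (q ^ (-(n : ℝ))) k / (qPoch q q k * qPoch q (q ^ (δ + 1)) k) *
        ((-1 : ℝ) ^ k * q ^ (k * (k - 1) / 2)) * (-(q ^ ((n : ℝ) + δ + 1)) * z) ^ k

/-- Little q-Jacobi polynomial `p_n(z;a,b|q)` (terminating `₂φ₁` series). -/
noncomputable def lqJacobi (q a b : ℝ) (n : ℕ) (z : ℝ) : ℝ :=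
  ∑ k ∈ Finset.range (n + 1),
    qPoch q (q ^ (-(n : ℝ))) k * qPoch q (a * b * q ^ (n + 1)) k /
      (qPoch q q k * qPoch q (a * q) k) * (q * z) ^ k

/-- q-Meixner polynomial `M_n(x;b,c;q)` evaluated at `x = q^{-z}`. -/
noncomputable def qMeixner (q b c : ℝ) (n : ℕ) (x : ℝ) : ℝ :=
  ∑ k ∈ Finset.range (n + 1),
    qPoch q (q ^ (-(n : ℝ))) k * qPoch q x k / (qPoch q q k * qPoch q (b * q) k) *
      (-(q ^ (n + 1)) / c) ^ k

/-- Al-Salam-Carlitz I polynomial `U_n^a(z;q)`. -/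
noncomputable def alSalamCarlitzI (q a : ℝ) (n : ℕ) (z : ℝ) : ℝ :=
  (-a) ^ n * q ^ (n * (n - 1) / 2) *
    ∑ k ∈ Finset.range (n + 1),
      qPoch q (q ^ (-(n : ℝ))) k * qPoch q z⁻¹ k / (qPoch q q k * qPoch q 0 k) *
        (q * z / a) ^ k

/-- The `₂φ₂` polynomial `φ_n^{(k)}(z) = ₂φ₂(q^{-n}, q^{γ+k}; q^{δ+1}, q^{γ}; q, -q^{n+δ+1} z)`. -/
noncomputable def phi2 (q δ γ : ℝ) (n k : ℕ) (z : ℝ) : ℝ :=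
  ∑ j ∈ Finset.range (n + 1),
    qPoch q (q ^ (-(n : ℝ))) j * qPoch q (q ^ (γ + (k : ℝ))) j /
      (qPoch q q j * qPoch q (q ^ (δ + 1)) j * qPoch q (q ^ γ) j) *
      ((-1 : ℝ) ^ j * q ^ (j * (j - 1) / 2)) * (-(q ^ ((n : ℝ) + δ + 1)) * z) ^ j

/-- The `₃φ₂` polynomial `Φ_n^{(k)}(z) = ₃φ₂(q^{-n}, q^{γ+k}, abq^{n+1}; aq, q^{γ}; q, qz)`. -/
noncomputable def Phi3 (q a b γ : ℝ) (n k : ℕ) (z : ℝ) : ℝ :=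
  ∑ j ∈ Finset.range (n + 1),
    qPoch q (q ^ (-(n : ℝ))) j * qPoch q (q ^ (γ + (k : ℝ))) j *
        qPoch q (a * b * q ^ (n + 1)) j /
      (qPoch q q j * qPoch q (a * q) j * qPoch q (q ^ γ) j) * (q * z) ^ j

/-- The `₃φ₂` polynomial `φ_n^{(k)}` built on q-Meixner data, at `x = q^{-z}`:
`₃φ₂(q^{-n}, q^{γ+k}, q^{-z}; bq, q^{γ}; q, -q^{n+1}/c)`. -/
noncomputable def phi3M (q b c γ : ℝ) (n k : ℕ) (x : ℝ) : ℝ :=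
  ∑ j ∈ Finset.range (n + 1),
    qPoch q (q ^ (-(n : ℝ))) j * qPoch q (q ^ (γ + (k : ℝ))) j * qPoch q x j /
      (qPoch q q j * qPoch q (b * q) j * qPoch q (q ^ γ) j) * (-(q ^ (n + 1)) / c) ^ j

/-- The `₃φ₂` polynomial `ϕ_n^{(k)}(z) = ₃φ₂(q^{-n}, q^{γ+k}, z^{-1}; 0, q^{γ}; q, qz/a)`. -/
noncomputable def phi3AS (q a γ : ℝ) (n k : ℕ) (z : ℝ) : ℝ :=
  ∑ j ∈ Finset.range (n + 1),
    qPoch q (q ^ (-(n : ℝ))) j * qPoch q (q ^ (γ + (k : ℝ))) j * qPoch q z⁻¹ j /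
      (qPoch q q j * qPoch q 0 j * qPoch q (q ^ γ) j) * (q * z / a) ^ j


/-- helper: `(a;q)_{k+1} = (a;q)_k (1 - a q^k)`. -/
lemma qPoch_succ (q a : ℝ) (k : ℕ) : qPoch q a (k+1) = qPoch q a k * (1 - a * q ^ k) :=
  Finset.prod_range_succ _ _

/-- helper: `(a;q)_{k+1} = (1-a) (aq;q)_k`. -/
lemma qPoch_succ_left (q a : ℝ) (k : ℕ) :
    qPoch q a (k+1) = (1 - a) * qPoch q (a * q) k := by
  rw [qPoch, Finset.prod_range_succ', qPoch, pow_zero, mul_one, mul_comm]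
  congr 1
  exact Finset.prod_congr rfl fun i _ => by ring

/-- telescoping auxiliary sequence for stmt7. -/
noncomputable def auxf (q b c x : ℝ) (n : ℕ) : ℕ → ℝ
  | 0 => 0
  | (j+1) => qPoch q (q ^ (-(n:ℝ))) j * qPoch q x (j+1) / (qPoch q q j * qPoch q (b*q) j) *
      (-(q ^ (n+2)) / c) ^ j * (q ^ j)⁻¹

lemma auxf_zero (q b c x : ℝ) (n : ℕ) : auxf q b c x n 0 = 0 := rfl

lemma auxf_succ (q b c x : ℝ) (n j : ℕ) :
    auxf q b c x n (j+1) = qPoch q (q ^ (-(n:ℝ))) j * qPoch q x (j+1) /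
      (qPoch q q j * qPoch q (b*q) j) * (-(q ^ (n+2)) / c) ^ j * (q ^ j)⁻¹ := rfl

set_option maxHeartbeats 1600000 in
/-- contiguous relation for q-Meixner polynomials:
`(bc + q^{-z}) M_n(q^{-z};b,c/q;q) = (c(bq^{n+1}-1)/q^{n+1}) M_{n+1}(q^{-z};b,c;q)
+ ((q^{n+1}+c)/q^{n+1}) M_n(q^{-z};b,c;q)`. -/
theorem stmt7 (q b c : ℝ) (hq0 : 0 < q) (hq1 : q < 1) (hb0 : 0 < b * q) (hb1 : b * q < 1)
    (hc : 0 < c) (n : ℕ) (z : ℝ) :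
    (b * c + q ^ (-z)) * qMeixner q b (c / q) n (q ^ (-z)) =
      c * (b * q ^ (n + 1) - 1) / q ^ (n + 1) * qMeixner q b c (n + 1) (q ^ (-z)) +
        (q ^ (n + 1) + c) / q ^ (n + 1) * qMeixner q b c n (q ^ (-z)) := by
  have hqne : q ≠ 0 := ne_of_gt hq0
  have hcne : c ≠ 0 := ne_of_gt hc
  have hsn : q ^ (-(n:ℝ)) = ((q:ℝ)^n)⁻¹ := by
    rw [Real.rpow_neg hq0.le, Real.rpow_natCast]
  have hsn1 : q ^ (-((n:ℝ)+1)) = ((q:ℝ)^(n+1))⁻¹ := by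
    rw [show -((n:ℝ)+1) = -(((n+1:ℕ):ℝ)) by push_cast; ring, Real.rpow_neg hq0.le,
      Real.rpow_natCast]
  have hNz : qPoch q (q ^ (-(n:ℝ))) (n+1) = 0 := by
    refine Finset.prod_eq_zero (Finset.self_mem_range_succ n) ?_
    rw [hsn, inv_mul_cancel₀ (pow_ne_zero n hqne)]
    ring
  have hQne : ∀ k : ℕ, qPoch q q k ≠ 0 := by
    intro k
    refine ne_of_gt (Finset.prod_pos fun i _ => ?_)
    have h2 : q ^ i ≤ 1 := pow_le_one₀ hq0.le hq1.le
    nlinarith [pow_pos hq0 i]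
  have hBne : ∀ k : ℕ, qPoch q (b*q) k ≠ 0 := by
    intro k
    refine ne_of_gt (Finset.prod_pos fun i _ => ?_)
    have h2 : q ^ i ≤ 1 := pow_le_one₀ hq0.le hq1.le
    nlinarith [pow_pos hq0 i]
  set x := q ^ (-z) with hxdef
  have hM1 : qMeixner q b (c/q) n x = ∑ k ∈ Finset.range (n+2),
      qPoch q (q ^ (-(n:ℝ))) k * qPoch q x k / (qPoch q q k * qPoch q (b*q) k) *
        (-(q ^ (n+1)) / (c/q)) ^ k := by
    rw [qMeixner]
    conv_rhs => rw [Finset.sum_range_succ]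
    rw [hNz]
    ring
  have hM3 : qMeixner q b c n x = ∑ k ∈ Finset.range (n+2),
      qPoch q (q ^ (-(n:ℝ))) k * qPoch q x k / (qPoch q q k * qPoch q (b*q) k) *
        (-(q ^ (n+1)) / c) ^ k := by
    rw [qMeixner]
    conv_rhs => rw [Finset.sum_range_succ]
    rw [hNz]
    ring
  have hM2 : qMeixner q b c (n+1) x = ∑ k ∈ Finset.range (n+2),
      qPoch q (q ^ (-((n:ℝ)+1))) k * qPoch q x k / (qPoch q q k * qPoch q (b*q) k) *
        (-(q ^ (n+2)) / c) ^ k := by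
    rw [qMeixner]
    push_cast
    norm_num
  rw [hM1, hM2, hM3, ← sub_eq_zero, Finset.mul_sum, Finset.mul_sum, Finset.mul_sum,
    ← Finset.sum_add_distrib, ← Finset.sum_sub_distrib]
  have htel : ∑ k ∈ Finset.range (n+2), (auxf q b c x n k - auxf q b c x n (k+1)) = 0 := by
    rw [Finset.sum_range_sub', auxf_zero, auxf_succ, hNz]
    ring
  refine Eq.trans (Finset.sum_congr rfl ?_) htel
  intro k hk
  match k with
  | 0 =>
    simp only [auxf_zero, auxf_succ, qPoch, Finset.range_zero, Finset.prod_empty,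
      Finset.prod_range_one, pow_zero, mul_one, one_mul, pow_one]
    field_simp
    rw [Finset.prod_range_succ, Finset.prod_range_zero]
    ring
  | (j+1) =>
    have harg : q ^ (-((n:ℝ)+1)) * q = q ^ (-(n:ℝ)) := by
      rw [hsn1, hsn, pow_succ]
      field_simp
    have hq1j : (1 : ℝ) - q * q ^ j ≠ 0 := by
      have h2 : q ^ j ≤ 1 := pow_le_one₀ hq0.le hq1.le
      nlinarith [pow_pos hq0 j]
    have hbq1j : (1 : ℝ) - b * q * q ^ j ≠ 0 := by
      have h2 : q ^ j ≤ 1 := pow_le_one₀ hq0.le hq1.le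
      nlinarith [pow_pos hq0 j]
    have hu : -(q ^ (n+1)) / (c/q) = -(q ^ (n+1)) / c * q := by
      field_simp
    have hu2 : -(q ^ (n+2)) / c = -(q ^ (n+1)) / c * q := by
      rw [pow_succ]
      ring
    rw [auxf_succ, auxf_succ, qPoch_succ q (q ^ (-(n:ℝ))) j,
      qPoch_succ_left q (q ^ (-((n:ℝ)+1))) j, harg,
      qPoch_succ q q j, qPoch_succ q (b*q) j, qPoch_succ q x (j+1)]
    rw [hu, hu2, hsn, hsn1]
    have hwne := hQne j
    have hene := hBne j
    have hsne : (q:ℝ)^n ≠ 0 := pow_ne_zero _ hqne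
    have htne : (q:ℝ)^j ≠ 0 := pow_ne_zero _ hqne
    generalize qPoch q ((q:ℝ)^n)⁻¹ j = A
    generalize qPoch q x (j+1) = p
    generalize hw : qPoch q q j = w at hwne ⊢
    generalize he : qPoch q (b*q) j = e at hene ⊢
    simp only [mul_pow, pow_succ]
    generalize (-((q:ℝ)^n*q)/c)^j = m
    generalize ht : (q:ℝ)^j = t at htne hq1j hbq1j ⊢
    have h1' : 1 - t * q ≠ 0 := by intro h; apply hq1j; linarith
    have h2' : 1 - b * t * q ≠ 0 := by intro h; apply hbq1j; linarith
    field_simp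
    ring
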